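/- Let K be a number field of degree n > 1, and let k be the positive integer generating the ideal tr_{K/ℚ}(O_K) ⊂ ℤ. Then the index of ℤ + O_K^0 in O_K equals n/k, and the index of ℤ + O_K^⊥ in O_K equals n^{n−1}. -/

import Mathlib

open NumberField

/-- The index of `ℤ + O_K^0` in `O_K` equals `n/k` and the index of
`ℤ + O_K^⊥` in `O_K` equals `n^(n−1)`. -/
theorem stmt_2 (K : Type*) [Field K] [NumberField K]
    (n : ℕ) (hn : 1 < n) (hdeg : Module.finrank ℚ K = n)
    (k : ℕ) (hk : 0 < k)
    (htr : LinearMap.range (Algebra.trace ℤ (𝓞 K)) = Ideal.span {(k : ℤ)})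
    (f : 𝓞 K →ₗ[ℤ] 𝓞 K)
    (hf : ∀ x : 𝓞 K, f x = n • x - (Algebra.trace ℤ (𝓞 K) x) • (1 : 𝓞 K)) :
    (Submodule.span ℤ {(1 : 𝓞 K)} ⊔
        LinearMap.ker (Algebra.trace ℤ (𝓞 K))).toAddSubgroup.index = n / k ∧
    (Submodule.span ℤ {(1 : 𝓞 K)} ⊔ LinearMap.range f).toAddSubgroup.index
      = n ^ (n - 1) := by
  set T := Algebra.trace ℤ (𝓞 K) with hTdef
  set S := Submodule.span ℤ {(1 : 𝓞 K)} with hSdef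
  have hOK : Module.finrank ℤ (𝓞 K) = n := by
    rw [RingOfIntegers.rank, hdeg]
  have hT1 : T 1 = (n : ℤ) := by
    have h := Algebra.trace_algebraMap (R := ℤ) (S := 𝓞 K) 1
    rw [map_one] at h
    rw [hTdef]
    simpa [hOK] using h
  constructor
  · -- Part 1
    set N : Submodule ℤ (𝓞 K) := S ⊔ LinearMap.ker T with hNdef
    have hker : (T.toAddMonoidHom.ker : AddSubgroup (𝓞 K)) = (LinearMap.ker T).toAddSubgroup := by
      ext x; simp [LinearMap.mem_ker]
    have hkerle : T.toAddMonoidHom.ker ≤ N.toAddSubgroup := by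
      rw [hker]
      intro x hx
      exact Submodule.mem_sup_right hx
    have hmap : Submodule.map T N = Ideal.span {(n : ℤ)} := by
      rw [hNdef, Submodule.map_sup, hSdef, Submodule.map_span, Set.image_singleton, hT1]
      have h2 : Submodule.map T (LinearMap.ker T) = ⊥ := by
        rw [Submodule.eq_bot_iff]
        rintro y ⟨x, hx, rfl⟩
        exact hx
      rw [h2, sup_bot_eq, Ideal.span]
    have := AddSubgroup.index_map N.toAddSubgroup T.toAddMonoidHom
    rw [sup_of_le_left hkerle] at this
    have hmapeq : AddSubgroup.map T.toAddMonoidHom N.toAddSubgroup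
        = (Ideal.span {(n : ℤ)}).toAddSubgroup := by
      rw [← hmap, Submodule.map_toAddSubgroup]
      rfl
    have hrange : (T.toAddMonoidHom.range : AddSubgroup ℤ)
        = (Ideal.span {(k : ℤ)}).toAddSubgroup := by
      rw [← htr]; ext x; simp [LinearMap.mem_range]
    rw [hmapeq, hrange] at this
    rw [Ideal.span_singleton_toAddSubgroup_eq_zmultiples, Int.index_zmultiples,
      Ideal.span_singleton_toAddSubgroup_eq_zmultiples, Int.index_zmultiples] at this
    simp only [Int.natAbs_natCast] at this
    rw [this, Nat.mul_div_cancel _ hk]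
  · -- Part 2
    have hn0 : (n : ℤ) ≠ 0 := by positivity
    -- torsion-free quotient
    have hsat : ∀ (c : ℤ), c ≠ 0 → ∀ x : 𝓞 K, c • x ∈ S → x ∈ S := by
      intro c hc x hx
      rw [hSdef, Submodule.mem_span_singleton] at hx
      obtain ⟨m, hm⟩ := hx
      have hm' : (m : 𝓞 K) = c • x := by rw [← hm]; simp [zsmul_eq_mul]
      have hmK : (m : K) = (c : K) * (algebraMap (𝓞 K) K x) := by
        have h2 := congrArg (algebraMap (𝓞 K) K) hm'
        simpa [zsmul_eq_mul] using h2
      have hcK : (c : K) ≠ 0 := by exact_mod_cast hc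
      have hKx : (algebraMap (𝓞 K) K) x = algebraMap ℚ K ((m : ℚ) / (c : ℚ)) := by
        have hcK2 : (algebraMap ℚ K) (c : ℚ) ≠ 0 :=
          (map_ne_zero (algebraMap ℚ K)).mpr (by exact_mod_cast hc)
        rw [map_div₀, eq_div_iff hcK2, map_intCast, map_intCast, hmK]
        ring
      have hint : IsIntegral ℤ ((m : ℚ) / (c : ℚ)) := by
        rw [← isIntegral_algebraMap_iff (algebraMap ℚ K).injective, ← hKx]
        exact (x : 𝓞 K).isIntegral_coe
      obtain ⟨z, hz⟩ := IsIntegrallyClosed.isIntegral_iff.mp hint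
      have hxz : x = (z : 𝓞 K) := by
        apply RingOfIntegers.coe_injective
        rw [hKx, ← hz]
        simp [map_intCast]
      rw [hSdef, Submodule.mem_span_singleton]
      exact ⟨z, by rw [hxz]; simp [zsmul_eq_mul]⟩
    haveI : NoZeroSMulDivisors ℤ (𝓞 K ⧸ S) := by
      constructor
      intro c x h
      by_cases hc : c = 0
      · exact Or.inl hc
      · right
        obtain ⟨y, rfl⟩ := Submodule.Quotient.mk_surjective S x
        have h2 : Submodule.Quotient.mk (c • y) = (0 : 𝓞 K ⧸ S) := by
          rw [Submodule.Quotient.mk_smul]; exact h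
        rw [Submodule.Quotient.mk_eq_zero] at h2 ⊢
        exact hsat c hc y h2
    haveI : Module.Free ℤ (𝓞 K ⧸ S) := Module.free_of_finite_type_torsion_free'
    have hS1 : Module.finrank ℤ S = 1 := by
      have e := LinearEquiv.toSpanNonzeroSingleton ℤ (𝓞 K) 1 one_ne_zero
      rw [← LinearEquiv.finrank_eq e, Module.finrank_self]
    have hr : Module.finrank ℤ (𝓞 K ⧸ S) = n - 1 := by
      have := S.finrank_quotient_add_finrank
      omega
    -- the multiplication-by-n endomorphism of the quotient
    set g : (𝓞 K ⧸ S) →ₗ[ℤ] (𝓞 K ⧸ S) := (n : ℤ) • LinearMap.id with hgdef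
    have hg : ∀ y : 𝓞 K ⧸ S, g y = (n : ℤ) • y := fun y => rfl
    have hginj : Function.Injective g := by
      intro a b hab
      have := smul_right_injective (𝓞 K ⧸ S) hn0
      exact this (by simpa [hg] using hab)
    -- Smith normal form of range g
    let b : Module.Basis (Fin (n - 1)) ℤ (𝓞 K ⧸ S) :=
      (Module.finBasis ℤ (𝓞 K ⧸ S)).reindex (finCongr hr)
    let bN : Module.Basis (Fin (n - 1)) ℤ (LinearMap.range g) :=
      b.map (LinearEquiv.ofInjective g hginj)
    let snf : Module.Basis.SmithNormalForm (LinearMap.range g) (Fin (n - 1)) (n - 1) :=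
      ⟨b, bN, Function.Embedding.refl _, fun _ => (n : ℤ), fun i => by
        simp only [bN, Module.Basis.map_apply]
        rw [LinearEquiv.ofInjective_apply]
        simp [hg]⟩
    have hidx : (LinearMap.range g).toAddSubgroup.index = n ^ (n - 1) := by
      rw [snf.toAddSubgroup_index_eq_pow_mul_prod]
      simp [snf, Int.index_zmultiples]
    -- relate the two indexes
    set N : Submodule ℤ (𝓞 K) := S ⊔ LinearMap.range f with hNdef
    have hq1 : S.mkQ (1 : 𝓞 K) = 0 := by
      rw [Submodule.mkQ_apply, Submodule.Quotient.mk_eq_zero]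
      exact Submodule.mem_span_singleton_self 1
    have hcomp : S.mkQ ∘ₗ f = g ∘ₗ S.mkQ := by
      ext x
      simp only [LinearMap.comp_apply, hf x, map_sub, map_smul, map_nsmul, hg]
      rw [hq1]
      simp
    have hmapN : Submodule.map S.mkQ N = LinearMap.range g := by
      rw [hNdef, Submodule.map_sup]
      have h1 : Submodule.map S.mkQ S = ⊥ := by
        rw [Submodule.eq_bot_iff]
        rintro y ⟨x, hx, rfl⟩
        rwa [Submodule.mkQ_apply, Submodule.Quotient.mk_eq_zero]
      have h2 : Submodule.map S.mkQ (LinearMap.range f) = LinearMap.range g := by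
        rw [← LinearMap.range_comp, hcomp, LinearMap.range_comp, Submodule.range_mkQ]
        exact (LinearMap.range_eq_map g).symm
      rw [h1, h2, bot_sup_eq]
    have hker : (S.mkQ.toAddMonoidHom.ker : AddSubgroup (𝓞 K)) = S.toAddSubgroup := by
      ext x
      simp [Submodule.Quotient.mk_eq_zero]
    have hkerle : S.mkQ.toAddMonoidHom.ker ≤ N.toAddSubgroup := by
      rw [hker]
      intro x hx
      exact Submodule.mem_sup_left hx
    have hrange : (S.mkQ.toAddMonoidHom.range : AddSubgroup (𝓞 K ⧸ S)) = ⊤ := by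
      rw [AddSubgroup.eq_top_iff']
      intro y
      obtain ⟨x, rfl⟩ := Submodule.Quotient.mk_surjective S y
      exact ⟨x, rfl⟩
    have := AddSubgroup.index_map N.toAddSubgroup S.mkQ.toAddMonoidHom
    rw [sup_of_le_left hkerle, hrange, AddSubgroup.index_top, mul_one] at this
    have heq : AddSubgroup.map S.mkQ.toAddMonoidHom N.toAddSubgroup
        = (LinearMap.range g).toAddSubgroup := by
      rw [← hmapN, Submodule.map_toAddSubgroup]
      rfl
    rw [← this, heq, hidx]
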